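/- Two ω-regular languages are equal if and only if they contain the same ultimately periodic words. Formally, if L and L' are ω-regular languages over a finite alphabet Σ, then L = L' iff UP(L) = UP(L'), where UP(L) = {u v^ω : u ∈ Σ*, v ∈ Σ⁺, u v^ω ∈ L}. -/

import Mathlib

/-- Prepend a finite word to an infinite word. -/
def prependW {α : Type} (u : List α) (w : ℕ → α) : ℕ → α :=
  fun i => if h : i < u.length then u.get ⟨i, h⟩ else w (i - u.length)

/-- The periodic infinite word `v^ω` (arbitrary when `v = []`). -/
def periodW {α : Type} [Inhabited α] (v : List α) : ℕ → α :=
  fun i => v.getD (i % v.length) default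

/-- The ultimately periodic word `u · v^ω`. -/
def upw {α : Type} [Inhabited α] (u v : List α) : ℕ → α :=
  prependW u (periodW v)

/-- The ultimately periodic words of an ω-language. -/
def UP {α : Type} [Inhabited α] (L : Set (ℕ → α)) : Set (ℕ → α) :=
  { w | ∃ u v : List α, v ≠ [] ∧ w = upw u v ∧ w ∈ L }

/-- `v^k` : `k`-fold repetition of the finite word `v`. -/
def rep {α : Type} (v : List α) (k : ℕ) : List α :=
  (List.replicate k v).flatten
/-- A nondeterministic Büchi automaton. -/
structure NBA (α : Type) : Type 1 where
  σ : Type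
  fin : Fintype σ
  start : Set σ
  step : σ → α → Set σ
  accept : Set σ

/-- The ω-language of a Büchi automaton: words admitting a run visiting
an accepting state infinitely often. -/
def NBA.lang {α : Type} (B : NBA α) : Set (ℕ → α) :=
  { w | ∃ r : ℕ → B.σ, r 0 ∈ B.start ∧ (∀ i, r (i + 1) ∈ B.step (r i) (w i)) ∧
      ∀ n, ∃ m, n ≤ m ∧ r m ∈ B.accept }

/-- An ω-language is ω-regular if some Büchi automaton recognizes it. -/
def IsOmegaRegular {α : Type} (L : Set (ℕ → α)) : Prop :=
  ∃ B : NBA α, B.lang = L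

section Prof
variable {α : Type}

def wordSeg (w : ℕ → α) (a b : ℕ) : List α :=
  (List.range (b - a)).map (fun k => w (a + k))

lemma wordSeg_length (w : ℕ → α) (a b : ℕ) : (wordSeg w a b).length = b - a := by
  simp [wordSeg]

lemma wordSeg_getElem (w : ℕ → α) (a b i : ℕ) (h : i < (wordSeg w a b).length) :
    (wordSeg w a b)[i] = w (a + i) := by
  simp [wordSeg]

lemma wordSeg_append (w : ℕ → α) {a b c : ℕ} (hab : a ≤ b) (hbc : b ≤ c) :
    wordSeg w a b ++ wordSeg w b c = wordSeg w a c := by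
  apply List.ext_getElem
  · simp [wordSeg_length]; omega
  · intro n h1 h2
    rw [wordSeg_getElem]
    by_cases hn : n < (wordSeg w a b).length
    · rw [List.getElem_append_left hn, wordSeg_getElem]
    · rw [List.getElem_append_right (le_of_not_gt hn), wordSeg_getElem]
      rw [wordSeg_length] at hn ⊢
      congr 1; omega

def pcomp {σ : Type} (P Q : Set (σ × σ × Bool)) : Set (σ × σ × Bool) :=
  {x | ∃ q b1 b2, (x.1, q, b1) ∈ P ∧ (q, x.2.1, b2) ∈ Q ∧ x.2.2 = (b1 || b2)}

def pone {σ : Type} : Set (σ × σ × Bool) := {x | x.1 = x.2.1 ∧ x.2.2 = false}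

def NBA.prof (B : NBA α) : List α → Set (B.σ × B.σ × Bool)
  | [] => pone
  | a :: x => pcomp {y | y.2.1 ∈ B.step y.1 a ∧ (y.2.2 = true → y.2.1 ∈ B.accept)} (B.prof x)

lemma pcomp_assoc {σ : Type} (P Q R : Set (σ × σ × Bool)) :
    pcomp (pcomp P Q) R = pcomp P (pcomp Q R) := by
  ext ⟨p, r, b⟩
  constructor
  · rintro ⟨q2, b12, b3, ⟨q1, b1, b2, h1, h2, h12⟩, h3, hb⟩
    exact ⟨q1, b1, b2 || b3, h1, ⟨q2, b2, b3, h2, h3, rfl⟩, by subst hb; subst h12; simp [Bool.or_assoc]⟩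
  · rintro ⟨q1, b1, b23, h1, ⟨q2, b2, b3, h2, h3, h23⟩, hb⟩
    exact ⟨q2, b1 || b2, b3, ⟨q1, b1, b2, h1, h2, rfl⟩, h3, by subst hb; subst h23; simp [Bool.or_assoc]⟩

lemma pcomp_one_right {σ : Type} (P : Set (σ × σ × Bool)) : pcomp P pone = P := by
  ext ⟨p, q, b⟩
  constructor
  · rintro ⟨q1, b1, b2, h1, ⟨he, hb2⟩, hb⟩
    simp only at he hb2
    subst hb; subst hb2; simpa [he] using h1
  · intro h; exact ⟨q, b, false, h, ⟨rfl, rfl⟩, by simp⟩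

lemma NBA.prof_append (B : NBA α) (x y : List α) :
    B.prof (x ++ y) = pcomp (B.prof x) (B.prof y) := by
  induction x with
  | nil =>
    simp only [List.nil_append, NBA.prof]
    ext ⟨p, q, b⟩
    constructor
    · intro h; exact ⟨p, false, b, ⟨rfl, rfl⟩, h, by simp⟩
    · rintro ⟨q1, b1, b2, ⟨he, hb1⟩, h2, hb⟩
      simp only at he hb1
      subst he; subst hb1; subst hb; simpa using h2
  | cons a x ih =>
    rw [List.cons_append, NBA.prof, NBA.prof, ih, pcomp_assoc]

lemma NBA.prof_iff (B : NBA α) (x : List α) (p q : B.σ) (b : Bool) :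
    (p, q, b) ∈ B.prof x ↔ ∃ r : ℕ → B.σ, r 0 = p ∧ r x.length = q ∧
      (∀ i (h : i < x.length), r (i+1) ∈ B.step (r i) x[i]) ∧
      (b = true → ∃ m, 1 ≤ m ∧ m ≤ x.length ∧ r m ∈ B.accept) := by
  induction x generalizing p b with
  | nil =>
    constructor
    · rintro ⟨he, hb⟩
      simp only at he hb
      subst he; subst hb
      exact ⟨fun _ => p, rfl, rfl, by simp, by simp⟩
    · rintro ⟨r, h0, hl, _, hacc⟩
      refine ⟨by simp only [List.length_nil] at hl; rw [← h0, hl], ?_⟩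
      cases b with
      | false => rfl
      | true => obtain ⟨m, h1, h2, _⟩ := hacc rfl; simp at h2; omega
  | cons a x ih =>
    constructor
    · rintro ⟨q1, b1, b2, ⟨hstep, hacc1⟩, h2, hb⟩
      simp only at hstep hacc1
      obtain ⟨r, h0, hl, hsteps, hacc2⟩ := (ih q1 b2).mp h2
      refine ⟨fun i => if i = 0 then p else r (i - 1), by simp, by simp [hl], ?_, ?_⟩
      · intro i hi
        cases i with
        | zero => simpa [h0] using hstep
        | succ j => simpa using hsteps j (by simpa using hi)
      · intro hbt
        subst hb
        rcases Bool.or_eq_true_iff.mp hbt with h1 | h2'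
        · exact ⟨1, le_refl 1, by simp, by simpa [h0] using hacc1 h1⟩
        · obtain ⟨m, hm1, hm2, hm3⟩ := hacc2 h2'
          exact ⟨m + 1, by omega, by simpa using hm2, by simpa [Nat.add_sub_cancel] using hm3⟩
    · rintro ⟨r, h0, hl, hsteps, hacc⟩
      have hstep0 : r 1 ∈ B.step p a := by
        have := hsteps 0 (by simp)
        simpa [h0] using this
      have hrun : ∀ b2 : Bool, (b2 = true → ∃ m, 1 ≤ m ∧ m ≤ x.length ∧ r (m + 1) ∈ B.accept) →
          (r 1, q, b2) ∈ B.prof x := by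
        intro b2 hv
        refine (ih (r 1) b2).mpr ⟨fun i => r (i + 1), rfl, by simpa using hl, ?_, ?_⟩
        · intro i hi
          exact hsteps (i + 1) (by simpa using hi)
        · intro hb2; obtain ⟨m, h1, h2, h3⟩ := hv hb2; exact ⟨m, h1, h2, h3⟩
      cases b with
      | false => exact ⟨r 1, false, false, ⟨hstep0, by simp⟩, hrun false (by simp), rfl⟩
      | true =>
        obtain ⟨m, hm1, hm2, hm3⟩ := hacc rfl
        by_cases hm : m = 1
        · subst hm
          exact ⟨r 1, true, false, ⟨hstep0, fun _ => hm3⟩, hrun false (by simp), rfl⟩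
        · refine ⟨r 1, false, true, ⟨hstep0, by simp⟩, hrun true ?_, rfl⟩
          intro _
          refine ⟨m - 1, by omega, by simp at hm2; omega, ?_⟩
          have : m - 1 + 1 = m := by omega
          rw [this]; exact hm3

lemma NBA.prof_seg_iff (B : NBA α) (w : ℕ → α) {a c : ℕ} (hac : a ≤ c) (p q : B.σ) (fl : Bool) :
    (p, q, fl) ∈ B.prof (wordSeg w a c) ↔ ∃ r : ℕ → B.σ, r a = p ∧ r c = q ∧
      (∀ i, a ≤ i → i < c → r (i+1) ∈ B.step (r i) (w i)) ∧
      (fl = true → ∃ m, a < m ∧ m ≤ c ∧ r m ∈ B.accept) := by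
  rw [NBA.prof_iff]
  constructor
  · rintro ⟨ρ, h0, hl, hst, hac'⟩
    refine ⟨fun k => ρ (k - a), by simpa using h0, ?_, ?_, ?_⟩
    · rw [wordSeg_length] at hl; exact hl
    · intro i h1 h2
      have hlt : i - a < (wordSeg w a c).length := by rw [wordSeg_length]; omega
      have := hst (i - a) hlt
      rw [wordSeg_getElem] at this
      have e1 : a + (i - a) = i := by omega
      have e2 : i + 1 - a = i - a + 1 := by omega
      rw [e1] at this; simpa [e2] using this
    · intro hfl
      obtain ⟨m, h1, h2, h3⟩ := hac' hfl
      rw [wordSeg_length] at h2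
      exact ⟨a + m, by omega, by omega, by simpa using h3⟩
  · rintro ⟨r, h0, hl, hst, hac'⟩
    refine ⟨fun k => r (a + k), by simpa using h0, ?_, ?_, ?_⟩
    · rw [wordSeg_length]
      have h : a + (c - a) = c := by omega
      simpa [h] using hl
    · intro i hi
      rw [wordSeg_getElem]
      have := hst (a + i) (by omega) (by rw [wordSeg_length] at hi; omega)
      have e : a + i + 1 = a + (i + 1) := by omega
      rw [e] at this; exact this
    · intro hfl
      obtain ⟨m, h1, h2, h3⟩ := hac' hfl
      refine ⟨m - a, by omega, by rw [wordSeg_length]; omega, ?_⟩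
      have h : a + (m - a) = m := by omega
      simpa [h] using h3

lemma NBA.saturation (B : NBA α) (w : ℕ → α) (n : ℕ → ℕ) (hn : StrictMono n)
    {e : Set (B.σ × B.σ × Bool)}
    (he : ∀ i j, i < j → B.prof (wordSeg w (n i) (n j)) = e) :
    w ∈ B.lang ↔ ∃ p q, p ∈ B.start ∧
      (p, q, false) ∈ B.prof (wordSeg w 0 (n 1)) ∧ (q, q, true) ∈ e := by
  have hnle : ∀ i, i ≤ n i := fun i => hn.le_apply
  have hee : pcomp e e = e := by
    have hseg : wordSeg w (n 0) (n 1) ++ wordSeg w (n 1) (n 2) = wordSeg w (n 0) (n 2) :=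
      wordSeg_append w (hn (by omega : (0:ℕ) < 1)).le (hn (by omega : (1:ℕ) < 2)).le
    calc pcomp e e = B.prof (wordSeg w (n 0) (n 1) ++ wordSeg w (n 1) (n 2)) := by
          rw [B.prof_append, he 0 1 (by omega), he 1 2 (by omega)]
      _ = e := by rw [hseg, he 0 2 (by omega)]
  have hpre : ∀ i, 1 ≤ i → B.prof (wordSeg w 0 (n i)) = B.prof (wordSeg w 0 (n 1)) := by
    intro i hi
    rcases eq_or_lt_of_le hi with h | h
    · rw [← h]
    · have ha1 : wordSeg w 0 (n 1) ++ wordSeg w (n 1) (n i) = wordSeg w 0 (n i) :=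
        wordSeg_append w (Nat.zero_le _) (hn h).le
      have ha0 : wordSeg w 0 (n 0) ++ wordSeg w (n 0) (n 1) = wordSeg w 0 (n 1) :=
        wordSeg_append w (Nat.zero_le _) (hn (by omega : (0:ℕ) < 1)).le
      calc B.prof (wordSeg w 0 (n i))
          = pcomp (B.prof (wordSeg w 0 (n 1))) e := by
            rw [← ha1, B.prof_append, he 1 i h]
        _ = pcomp (pcomp (B.prof (wordSeg w 0 (n 0))) e) e := by
            rw [← ha0, B.prof_append, he 0 1 (by omega)]
        _ = pcomp (B.prof (wordSeg w 0 (n 0))) e := by rw [pcomp_assoc, hee]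
        _ = B.prof (wordSeg w 0 (n 1)) := by
            rw [← ha0, B.prof_append, he 0 1 (by omega)]
  have hfind : ∀ k, n 1 ≤ k → ∃ i, 1 ≤ i ∧ n i ≤ k ∧ k < n (i+1) := by
    intro k hk
    have h1k : 1 ≤ k := le_trans (hnle 1) hk
    set i := Nat.findGreatest (fun i => n i ≤ k) k with hidef
    have hP : n i ≤ k := Nat.findGreatest_spec (P := fun j => n j ≤ k) (m := 1) h1k hk
    have hge : 1 ≤ i := Nat.le_findGreatest (P := fun j => n j ≤ k) (m := 1) h1k hk
    have hlt : k < n (i+1) := by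
      by_contra hcon
      push_neg at hcon
      have hik : i + 1 ≤ k := le_trans (hnle (i+1)) hcon
      have hle := Nat.le_findGreatest (P := fun j => n j ≤ k) (m := i+1) hik hcon
      rw [← hidef] at hle
      omega
    exact ⟨i, hge, hP, hlt⟩
  constructor
  · rintro ⟨r, hstart, hstep, hacc⟩
    have : Finite B.σ := @Finite.of_fintype _ B.fin
    obtain ⟨q, hq⟩ := Finite.exists_infinite_fiber (fun i => r (n i))
    have hqI : {i : ℕ | r (n i) = q}.Infinite := by
      have h : ((fun i => r (n i)) ⁻¹' {q}).Infinite :=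
        (Set.infinite_coe_iff (s := (fun i => r (n i)) ⁻¹' {q})).mp hq
      have he' : {i : ℕ | r (n i) = q} = (fun i => r (n i)) ⁻¹' {q} := by
        ext i
        simp [Set.mem_preimage]
      rw [he']
      exact h
    obtain ⟨i, hiI, hi1⟩ := hqI.exists_gt 0
    obtain ⟨m, hm1, hm2⟩ := hacc (n i + 1)
    obtain ⟨j, hjI, hj⟩ := hqI.exists_gt (max i m)
    refine ⟨r 0, q, hstart, ?_, ?_⟩
    · rw [← hpre i hi1, B.prof_seg_iff w (Nat.zero_le _)]
      exact ⟨r, rfl, hiI, fun k _ _ => hstep k, by simp⟩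
    · rw [← he i j (by omega), B.prof_seg_iff w (hn (by omega : i < j)).le]
      refine ⟨r, hiI, hjI, fun k _ _ => hstep k, fun _ => ⟨m, by omega, ?_, hm2⟩⟩
      have h1 : m ≤ j := by omega
      exact le_trans h1 (hnle j)
  · rintro ⟨p, q, hstart, h1, h2⟩
    obtain ⟨r0, hr00, hr01, hr0s, -⟩ := (B.prof_seg_iff w (Nat.zero_le (n 1)) p q false).mp h1
    have hex : ∀ i : ℕ, ∃ r : ℕ → B.σ, r (n i) = q ∧ r (n (i+1)) = q ∧
        (∀ k, n i ≤ k → k < n (i+1) → r (k+1) ∈ B.step (r k) (w k)) ∧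
        ∃ m, n i < m ∧ m ≤ n (i+1) ∧ r m ∈ B.accept := by
      intro i
      have h2' : (q, q, true) ∈ B.prof (wordSeg w (n i) (n (i+1))) := by
        rw [he i (i+1) (by omega)]; exact h2
      obtain ⟨r, ha, hb, hc, hd⟩ := (B.prof_seg_iff w (hn (by omega : i < i+1)).le q q true).mp h2'
      exact ⟨r, ha, hb, hc, hd rfl⟩
    choose rr ha hb hc hd using hex
    set blk : ℕ → ℕ := fun k => Nat.findGreatest (fun i => n i < k) k with hblk
    have blk_eq : ∀ k i, n i < k → k ≤ n (i+1) → blk k = i := by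
      intro k i h1' h2'
      rw [hblk]
      rw [Nat.findGreatest_eq_iff]
      refine ⟨by have := hnle i; omega, fun _ => h1', fun j hj1 hj2 => ?_⟩
      have : n (i+1) ≤ n j := hn.le_iff_le.mpr hj1
      omega
    set R : ℕ → B.σ := fun k => if k ≤ n 1 then r0 k else rr (blk k) k with hR
    have agree : ∀ i, 1 ≤ i → ∀ k, n i ≤ k → k ≤ n (i+1) → R k = rr i k := by
      intro i hi k hk1 hk2
      by_cases hkn : k ≤ n 1
      · have hni : n 1 ≤ n i := hn.le_iff_le.mpr hi
        have hk : k = n 1 := by omega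
        have hieq : i = 1 := by
          by_contra hne
          have h1i : 1 < i := by omega
          have := hn h1i
          omega
        subst hieq; subst hk
        rw [hR]; simp only [le_refl, if_pos]
        rw [hr01, ha 1]
      · rw [hR]; simp only [hkn, if_neg, not_false_iff, if_false]
        rcases eq_or_lt_of_le hk1 with h | h
        · have hi1 : i - 1 + 1 = i := by omega
          have hblkk : blk k = i - 1 := by
            apply blk_eq
            · have hlt : i - 1 < i := by omega
              have := hn hlt; omega
            · rw [hi1]; omega
          rw [hblkk, ← h]
          have e1 : rr (i-1) (n i) = q := by
            have := hb (i-1); rw [hi1] at this; exact this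
          rw [e1, ha i]
        · rw [blk_eq k i h hk2]
    refine ⟨R, ?_, ?_, ?_⟩
    · have hz : R 0 = r0 0 := by rw [hR]; simp
      rw [hz, hr00]; exact hstart
    · intro k
      by_cases hk : k < n 1
      · have e1 : R k = r0 k := by rw [hR]; simp [hk.le]
        have e2 : R (k+1) = r0 (k+1) := by rw [hR]; simp [Nat.succ_le_of_lt hk]
        rw [e1, e2]
        exact hr0s k (Nat.zero_le _) hk
      · push_neg at hk
        obtain ⟨i, hi1, hi2, hi3⟩ := hfind k hk
        have e1 : R k = rr i k := agree i hi1 k hi2 hi3.le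
        have e2 : R (k+1) = rr i (k+1) := agree i hi1 (k+1) (by omega) hi3
        rw [e1, e2]
        exact hc i k hi2 hi3
    · intro N
      obtain ⟨m, hm1, hm2, hm3⟩ := hd (N + 1)
      have hmN : n (N+1) ≥ N + 1 := hnle (N+1)
      have e1 : R m = rr (N+1) m := agree (N+1) (by omega) m (by omega) hm2
      exact ⟨m, by omega, by rw [e1]; exact hm3⟩

lemma inf_fiber {C : Type} [Finite C] {S : Set ℕ} (hS : S.Infinite) (g : ℕ → C) :
    ∃ c, {x | x ∈ S ∧ g x = c}.Infinite := by
  by_contra h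
  push_neg at h
  have hsub : S ⊆ ⋃ c, {x | x ∈ S ∧ g x = c} := fun x hx => Set.mem_iUnion.mpr ⟨g x, hx, rfl⟩
  exact hS (Set.Finite.subset (Set.finite_iUnion h) hsub)

lemma ramsey_pairs {C : Type} [Finite C] (f : ℕ → ℕ → C) :
    ∃ (g : ℕ → ℕ) (c : C), StrictMono g ∧ ∀ i j, i < j → f (g i) (g j) = c := by
  classical
  have next : ∀ st : {p : ℕ × Set ℕ // p.2.Infinite ∧ ∀ x ∈ p.2, p.1 < x},
      ∃ st' : {p : ℕ × Set ℕ // p.2.Infinite ∧ ∀ x ∈ p.2, p.1 < x},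
      st'.1.1 ∈ st.1.2 ∧ st'.1.2 ⊆ st.1.2 ∧
      ∀ x ∈ st'.1.2, f st.1.1 x = f st.1.1 st'.1.1 := by
    rintro ⟨⟨a, S⟩, hS, hgt⟩
    obtain ⟨c, hc⟩ := inf_fiber hS (f a)
    obtain ⟨a', ha'⟩ := hc.nonempty
    have hinf : {x | (x ∈ S ∧ f a x = c) ∧ a' < x}.Infinite := by
      have hds : {x | (x ∈ S ∧ f a x = c) ∧ a' < x} = {x | x ∈ S ∧ f a x = c} \ Set.Iic a' := by
        ext x
        simp only [Set.mem_setOf_eq, Set.mem_diff, Set.mem_Iic]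
        constructor
        · rintro ⟨h1, h2⟩; exact ⟨h1, by omega⟩
        · rintro ⟨h1, h2⟩; exact ⟨h1, by omega⟩
      rw [hds]
      exact hc.diff (Set.finite_Iic a')
    exact ⟨⟨⟨a', {x | (x ∈ S ∧ f a x = c) ∧ a' < x}⟩, hinf, fun x hx => hx.2⟩,
      ha'.1, fun x hx => hx.1.1, fun x hx => by rw [hx.1.2, ha'.2]⟩
  let st : ℕ → {p : ℕ × Set ℕ // p.2.Infinite ∧ ∀ x ∈ p.2, p.1 < x} :=
    fun k => Nat.rec ⟨(0, Set.Ioi 0), Set.Ioi_infinite 0, fun x hx => hx⟩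
      (fun _ prev => Classical.choose (next prev)) k
  have hstep : ∀ k, (st (k+1)).1.1 ∈ (st k).1.2 ∧ (st (k+1)).1.2 ⊆ (st k).1.2 ∧
      ∀ x ∈ (st (k+1)).1.2, f (st k).1.1 x = f (st k).1.1 (st (k+1)).1.1 :=
    fun k => Classical.choose_spec (next (st k))
  set a : ℕ → ℕ := fun k => (st k).1.1 with hadef
  have hmono : StrictMono a := by
    apply strictMono_nat_of_lt_succ
    intro k
    exact (st k).2.2 _ (hstep k).1
  have hSsub : ∀ i j, i ≤ j → (st j).1.2 ⊆ (st i).1.2 := by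
    intro i j hij
    induction j with
    | zero => have : i = 0 := by omega
              subst this; exact fun x hx => hx
    | succ m ih =>
      rcases Nat.lt_or_ge i (m+1) with h | h
      · exact fun x hx => ih (by omega) ((hstep m).2.1 hx)
      · have : i = m + 1 := by omega
        subst this; exact fun x hx => hx
  have hmem : ∀ i j, i < j → (st j).1.1 ∈ (st i).1.2 := by
    intro i j hij
    cases j with
    | zero => omega
    | succ m => exact hSsub i m (by omega) (hstep m).1
  have key : ∀ i j, i < j → f (a i) (a j) = f (a i) (a (i+1)) := by
    intro i j hij
    rcases eq_or_lt_of_le (Nat.succ_le_of_lt hij) with h | h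
    · rw [← h]
    · exact (hstep i).2.2 _ (hmem (i+1) j h)
  obtain ⟨c, hc⟩ := inf_fiber (Set.infinite_univ) (fun k => f (a k) (a (k+1)))
  have hp : {k | f (a k) (a (k+1)) = c}.Infinite := by
    have : {x | x ∈ Set.univ ∧ f (a x) (a (x+1)) = c} = {k | f (a k) (a (k+1)) = c} := by
      ext x; simp
    rw [← this]; exact hc
  refine ⟨fun i => a (Nat.nth (fun k => f (a k) (a (k+1)) = c) i), c,
    hmono.comp (Nat.nth_strictMono hp), ?_⟩
  intro i j hij
  have hlt := Nat.nth_strictMono hp hij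
  rw [key _ _ hlt]
  exact Nat.nth_mem_of_infinite hp i

lemma upw_seg_head [Inhabited α] (u v : List α) :
    wordSeg (upw u v) 0 u.length = u := by
  apply List.ext_getElem
  · simp [wordSeg_length]
  · intro j h1 h2
    rw [wordSeg_getElem]
    rw [wordSeg_length] at h1
    simp only [upw, prependW, Nat.zero_add]
    rw [dif_pos (by omega : j < u.length)]
    simp [List.get_eq_getElem]

lemma upw_seg_block [Inhabited α] (u v : List α) (hv : v ≠ []) (i : ℕ) :
    wordSeg (upw u v) (u.length + i * v.length) (u.length + (i+1) * v.length) = v := by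
  have hvl : 0 < v.length := List.length_pos_iff.mpr hv
  apply List.ext_getElem
  · rw [wordSeg_length]
    have : (i+1) * v.length = i * v.length + v.length := by ring
    omega
  · intro j h1 h2
    rw [wordSeg_getElem]
    rw [wordSeg_length] at h1
    have hj : j < v.length := by
      have : (i+1) * v.length = i * v.length + v.length := by ring
      omega
    simp only [upw, prependW]
    rw [dif_neg (by omega : ¬ u.length + i * v.length + j < u.length)]
    have he1 : u.length + i * v.length + j - u.length = i * v.length + j := by omega
    rw [he1]
    simp only [periodW]
    rw [mul_comm i v.length, Nat.mul_add_mod, Nat.mod_eq_of_lt hj]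
    exact List.getD_eq_getElem v default hj

lemma NBA.prof_blocks (B : NBA α) (w' : ℕ → α) (m : ℕ → ℕ) (hm : StrictMono m)
    {e : Set (B.σ × B.σ × Bool)} (hb : ∀ i, B.prof (wordSeg w' (m i) (m (i+1))) = e)
    (hee : pcomp e e = e) :
    ∀ i j, i < j → B.prof (wordSeg w' (m i) (m j)) = e := by
  intro i j hij
  induction j with
  | zero => omega
  | succ k ih =>
    rcases Nat.lt_or_ge i k with h | h
    · rw [← wordSeg_append w' (hm h).le (hm (by omega : k < k+1)).le, B.prof_append,
        ih h, hb k, hee]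
    · have : i = k := by omega
      subst this; exact hb i

lemma NBA.idem_of_pairwise (B : NBA α) (w : ℕ → α) (n : ℕ → ℕ) (hn : StrictMono n)
    {e : Set (B.σ × B.σ × Bool)} (he : ∀ i j, i < j → B.prof (wordSeg w (n i) (n j)) = e) :
    pcomp e e = e := by
  have hseg : wordSeg w (n 0) (n 1) ++ wordSeg w (n 1) (n 2) = wordSeg w (n 0) (n 2) :=
    wordSeg_append w (hn (by omega : (0:ℕ) < 1)).le (hn (by omega : (1:ℕ) < 2)).le
  calc pcomp e e = B.prof (wordSeg w (n 0) (n 1) ++ wordSeg w (n 1) (n 2)) := by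
        rw [B.prof_append, he 0 1 (by omega), he 1 2 (by omega)]
    _ = e := by rw [hseg, he 0 2 (by omega)]

lemma key_lemma {α : Type} [Inhabited α] (L L' : Set (ℕ → α)) (B B' : NBA α)
    (hB : B.lang = L) (hB' : B'.lang = L') (hUP : UP L = UP L')
    {w : ℕ → α} (hw : w ∈ L) : w ∈ L' := by
  classical
  have hfin1 : Finite B.σ := @Finite.of_fintype _ B.fin
  have hfin2 : Finite B'.σ := @Finite.of_fintype _ B'.fin
  obtain ⟨g, c, hg, hcol⟩ := ramsey_pairs
    (fun i j => (B.prof (wordSeg w i j), B'.prof (wordSeg w i j)))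
  have he1 : ∀ i j, i < j → B.prof (wordSeg w (g i) (g j)) = c.1 :=
    fun i j h => congrArg Prod.fst (hcol i j h)
  have he2 : ∀ i j, i < j → B'.prof (wordSeg w (g i) (g j)) = c.2 :=
    fun i j h => congrArg Prod.snd (hcol i j h)
  set u := wordSeg w 0 (g 0) with hu
  set v := wordSeg w (g 0) (g 1) with hvdef
  have hvpos : 0 < v.length := by
    rw [hvdef, wordSeg_length]
    have := hg (by omega : (0:ℕ) < 1)
    omega
  have hvne : v ≠ [] := List.length_pos_iff.mp hvpos
  set w' := upw u v with hw'def
  set m : ℕ → ℕ := fun i => u.length + i * v.length with hm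
  have hmmono : StrictMono m := by
    intro i j hij
    simp only [hm]
    have h2 : i * v.length < j * v.length := (Nat.mul_lt_mul_right hvpos).mpr hij
    omega
  have hblocks : ∀ i, wordSeg w' (m i) (m (i+1)) = v := fun i => upw_seg_block u v hvne i
  have hm0 : m 0 = u.length := by simp [hm]
  have hhead : wordSeg w' 0 (m 0) = u := by rw [hm0]; exact upw_seg_head u v
  have hee1 : pcomp c.1 c.1 = c.1 := B.idem_of_pairwise w g hg he1
  have hee2 : pcomp c.2 c.2 = c.2 := B'.idem_of_pairwise w g hg he2
  have he1' : ∀ i j, i < j → B.prof (wordSeg w' (m i) (m j)) = c.1 :=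
    B.prof_blocks w' m hmmono (fun i => by rw [hblocks i]; exact he1 0 1 (by omega)) hee1
  have he2' : ∀ i j, i < j → B'.prof (wordSeg w' (m i) (m j)) = c.2 :=
    B'.prof_blocks w' m hmmono (fun i => by rw [hblocks i]; exact he2 0 1 (by omega)) hee2
  have hsegeq : wordSeg w' 0 (m 1) = wordSeg w 0 (g 1) := by
    rw [← wordSeg_append w' (Nat.zero_le _) (hmmono (by omega : (0:ℕ) < 1)).le,
      hhead, hblocks 0,
      ← wordSeg_append w (Nat.zero_le _) (hg (by omega : (0:ℕ) < 1)).le]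
  have hiff1 : (w ∈ B.lang) ↔ (w' ∈ B.lang) := by
    rw [B.saturation w g hg he1, B.saturation w' m hmmono he1', hsegeq]
  have hiff2 : (w ∈ B'.lang) ↔ (w' ∈ B'.lang) := by
    rw [B'.saturation w g hg he2, B'.saturation w' m hmmono he2', hsegeq]
  have hw'L : w' ∈ L := by
    rw [← hB]
    exact hiff1.mp (by rw [hB]; exact hw)
  have hup : w' ∈ UP L := ⟨u, v, hvne, rfl, hw'L⟩
  rw [hUP] at hup
  obtain ⟨_, _, _, _, hw'L'⟩ := hup
  rw [← hB']
  exact hiff2.mpr (by rw [hB']; exact hw'L')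

end Prof

/-- Two ω-regular languages are equal iff they contain the same
ultimately periodic words. -/

theorem stmt_0 {α : Type} [Fintype α] [Inhabited α] (L L' : Set (ℕ → α))
    (hL : IsOmegaRegular L) (hL' : IsOmegaRegular L') :
    L = L' ↔ UP L = UP L' := by
  constructor
  · intro h; rw [h]
  · intro hU
    obtain ⟨B, hB⟩ := hL
    obtain ⟨B', hB'⟩ := hL'
    ext w
    exact ⟨fun hw => key_lemma L L' B B' hB hB' hU hw,
           fun hw => key_lemma L' L B' B hB' hB hU.symm hw⟩
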